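/- (Lemma neg2.) Let p ∈ (0,1) and q > 0, and define φ(t) := (1 − t^p)^{−q} for t ∈ [0,1). Then there exist b ∈ (0,1) and c ∈ (0,b) such that φ is strictly concave on [0,b] and φ(0) + (b/c)(φ(c) − φ(0)) > φ(b) + 2. -/

import Mathlib

open Real Set

/-- Lemma neg2: for `p ∈ (0,1)`, `q > 0`, and `φ(t) = (1-t^p)^{-q}`, there exist
`b ∈ (0,1)` and `c ∈ (0,b)` with `φ` strictly concave on `[0,b]` and
`φ(0) + (b/c)(φ(c) - φ(0)) > φ(b) + 2`. -/
theorem stmt15 (p q : ℝ) (hp : p ∈ Set.Ioo (0 : ℝ) 1) (hq : 0 < q)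
    (φ : ℝ → ℝ) (hφ : φ = fun t => (1 - t ^ p) ^ (-q)) :
    ∃ b c : ℝ, 0 < c ∧ c < b ∧ b < 1 ∧
      StrictConcaveOn ℝ (Set.Icc 0 b) φ ∧
      φ 0 + (b / c) * (φ c - φ 0) > φ b + 2 := by
  obtain ⟨hp0, hp1⟩ := hp
  have hp0' : p ≠ 0 := ne_of_gt hp0
  have hpq1 : 0 < p * q + 1 := by positivity
  set B : ℝ := (1 - p) / (2 * (p * q + 1)) with hB
  have hB0 : 0 < B := div_pos (by linarith) (by linarith)
  have hB1 : B < 1 := by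
    rw [hB, div_lt_one (by linarith)]
    nlinarith [mul_pos hp0 hq]
  set b : ℝ := B ^ (1 / p) with hb
  have hb0 : 0 < b := rpow_pos_of_pos hB0 _
  have hbp : b ^ p = B := by
    rw [hb, ← Real.rpow_mul hB0.le, one_div_mul_cancel hp0', Real.rpow_one]
  have hb1 : b < 1 := Real.rpow_lt_one hB0.le hB1 (by positivity)
  -- first derivative
  have hd1 : ∀ x ∈ Set.Ioo (0:ℝ) 1,
      HasDerivAt φ (q * p * (x ^ (p-1) * (1 - x ^ p) ^ (-q-1))) x := by
    rintro x ⟨hx0, hx1⟩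
    have hxp1 : x ^ p < 1 := Real.rpow_lt_one hx0.le hx1 hp0
    have hxp0 : (0:ℝ) < 1 - x ^ p := by linarith
    have h1 : HasDerivAt (fun t : ℝ => t ^ p) (p * x ^ (p-1)) x :=
      Real.hasDerivAt_rpow_const (Or.inl hx0.ne')
    have h2 : HasDerivAt (fun t : ℝ => 1 - t ^ p) (-(p * x ^ (p-1))) x := h1.const_sub 1
    have h3 : HasDerivAt (fun y : ℝ => y ^ (-q)) (-q * (1 - x ^ p) ^ (-q - 1)) (1 - x ^ p) :=
      Real.hasDerivAt_rpow_const (Or.inl hxp0.ne')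
    have h4 := h3.comp x h2
    rw [hφ]
    convert h4 using 1
    exacts [rfl, rfl, rfl, by ring]
  -- second derivative
  have hd2 : ∀ x ∈ Set.Ioo (0:ℝ) 1,
      HasDerivAt (fun t => q * p * (t ^ (p-1) * (1 - t ^ p) ^ (-q-1)))
        (q * p * (((p-1) * x ^ (p-2)) * (1 - x ^ p) ^ (-q-1) +
          x ^ (p-1) * (((-q-1) * (1 - x ^ p) ^ (-q-2)) * (-(p * x ^ (p-1)))))) x := by
    rintro x ⟨hx0, hx1⟩
    have hxp1 : x ^ p < 1 := Real.rpow_lt_one hx0.le hx1 hp0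
    have hxp0 : (0:ℝ) < 1 - x ^ p := by linarith
    have h1 : HasDerivAt (fun t : ℝ => t ^ (p-1)) ((p-1) * x ^ (p-2)) x := by
      have := Real.hasDerivAt_rpow_const (p := p - 1) (Or.inl hx0.ne')
      convert this using 2
      ring
    have h2 : HasDerivAt (fun t : ℝ => 1 - t ^ p) (-(p * x ^ (p-1))) x :=
      (Real.hasDerivAt_rpow_const (Or.inl hx0.ne')).const_sub 1
    have h3 : HasDerivAt (fun y : ℝ => y ^ (-q-1)) ((-q-1) * (1 - x ^ p) ^ (-q-2)) (1 - x ^ p) := by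
      have := Real.hasDerivAt_rpow_const (p := -q-1) (Or.inl hxp0.ne')
      convert this using 2
      ring
    have h5 := h3.comp x h2
    exact (h1.mul h5).const_mul (q * p)
  -- strict concavity
  have hconc : StrictConcaveOn ℝ (Set.Icc 0 b) φ := by
    apply strictConcaveOn_of_deriv2_neg (convex_Icc 0 b)
    · -- continuity
      rw [hφ]
      intro x hx
      have hxb : x ^ p ≤ b ^ p := Real.rpow_le_rpow hx.1 hx.2 hp0.le
      have hxp0 : (0:ℝ) < 1 - x ^ p := by rw [hbp] at hxb; linarith
      have c1 : ContinuousAt (fun t : ℝ => 1 - t ^ p) x :=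
        continuousAt_const.sub (Real.continuousAt_rpow_const x p (Or.inr hp0.le))
      have c2 : ContinuousAt (fun y : ℝ => y ^ (-q)) (1 - x ^ p) :=
        Real.continuousAt_rpow_const _ _ (Or.inl hxp0.ne')
      have h := ContinuousAt.comp (x := x) (g := fun y : ℝ => y ^ (-q)) (f := fun t : ℝ => 1 - t ^ p) c2 c1
      exact h.continuousWithinAt
    · intro x hx
      rw [interior_Icc] at hx
      have hxI : x ∈ Set.Ioo (0:ℝ) 1 := ⟨hx.1, hx.2.trans hb1⟩
      have hx0 := hxI.1
      have hxp1 : x ^ p < 1 := Real.rpow_lt_one hx0.le hxI.2 hp0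
      have hxp0 : (0:ℝ) < 1 - x ^ p := by linarith
      have hev : deriv φ =ᶠ[nhds x] fun t => q * p * (t ^ (p-1) * (1 - t ^ p) ^ (-q-1)) := by
        filter_upwards [Ioo_mem_nhds hxI.1 hxI.2] with y hy using (hd1 y hy).deriv
      have h2 : deriv^[2] φ x = deriv (deriv φ) x := rfl
      rw [h2, hev.deriv_eq, (hd2 x hxI).deriv]
      -- show negativity
      have hY : (1 - x ^ p) ^ (-q-1) = (1 - x ^ p) ^ (-q-2) * (1 - x ^ p) := by
        rw [show (-q-1 : ℝ) = (-q-2) + 1 by ring, Real.rpow_add hxp0, Real.rpow_one]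
      have hX : x ^ (p-1) * x ^ (p-1) = x ^ (p-2) * x ^ p := by
        rw [← Real.rpow_add hx0, ← Real.rpow_add hx0]
        ring_nf
      have hval : q * p * (((p-1) * x ^ (p-2)) * (1 - x ^ p) ^ (-q-1) +
          x ^ (p-1) * (((-q-1) * (1 - x ^ p) ^ (-q-2)) * (-(p * x ^ (p-1)))))
          = q * p * (x ^ (p-2) * (1 - x ^ p) ^ (-q-2)) * ((p-1) + (p*q+1) * x ^ p) := by
        rw [hY]
        linear_combination (q * p * (q+1) * p * (1 - x ^ p) ^ (-q-2)) * hX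
      rw [hval]
      have hXB : x ^ p < B := by
        rw [← hbp]
        exact Real.rpow_lt_rpow hx0.le hx.2 hp0
      have hbr : (p*q+1) * B = (1-p)/2 := by
        rw [hB]; field_simp
      have hneg : (p-1) + (p*q+1) * x ^ p < 0 := by
        have : (p*q+1) * x ^ p < (p*q+1) * B := by
          apply mul_lt_mul_of_pos_left hXB (by linarith)
        rw [hbr] at this
        linarith
      have hpos : 0 < q * p * (x ^ (p-2) * (1 - x ^ p) ^ (-q-2)) := by
        have := Real.rpow_pos_of_pos hx0 (p-2)
        have := Real.rpow_pos_of_pos hxp0 (-q-2)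
        positivity
      exact mul_neg_of_pos_of_neg hpos hneg
  -- choose c
  have hφ0 : φ 0 = 1 := by
    rw [hφ]; simp [Real.zero_rpow hp0']
  have hφb1 : 1 ≤ φ b := by
    rw [hφ]
    have : b ^ p < 1 := by rw [hbp]; exact hB1
    have hbp0 : 0 < b ^ p := Real.rpow_pos_of_pos hb0 p
    exact Real.one_le_rpow_of_pos_of_le_one_of_nonpos (by linarith) (by linarith) (by linarith)
  set r : ℝ := min q 1 with hr
  have hr0 : 0 < r := lt_min hq one_pos
  have hr1 : r ≤ 1 := min_le_right _ _
  have hrq : r ≤ q := min_le_left _ _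
  set M : ℝ := φ b + 1 with hM
  have hM2 : 2 ≤ M := by linarith
  set A : ℝ := r * b / M with hA
  have hA0 : 0 < A := div_pos (by positivity) (by linarith)
  set c : ℝ := min (b/2) ((A/2) ^ (1/(1-p))) with hc
  have hc0 : 0 < c := lt_min (by linarith) (Real.rpow_pos_of_pos (by positivity) _)
  have hcb : c < b := lt_of_le_of_lt (min_le_left _ _) (by linarith)
  have hc1 : c < 1 := hcb.trans hb1
  have hcp : c ^ (1-p) ≤ A/2 := by
    calc c ^ (1-p) ≤ ((A/2) ^ (1/(1-p))) ^ (1-p) :=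
          Real.rpow_le_rpow hc0.le (min_le_right _ _) (by linarith)
      _ = A/2 := by
          rw [← Real.rpow_mul (by positivity), one_div_mul_cancel (by linarith : (1:ℝ)-p ≠ 0),
            Real.rpow_one]
  -- Bernoulli lower bound on φ c
  have hcp1 : c ^ p < 1 := Real.rpow_lt_one hc0.le hc1 hp0
  have hcp0 : 0 < c ^ p := Real.rpow_pos_of_pos hc0 p
  have hbase : (0:ℝ) < 1 - c ^ p := by linarith
  have h1 : (1 - c ^ p) ^ r ≤ 1 - r * c ^ p := by
    have := rpow_one_add_le_one_add_mul_self (s := -(c ^ p)) (by linarith) hr0.le hr1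
    simpa [sub_eq_add_neg, mul_neg] using this
  have h3 : 1 + r * c ^ p ≤ (1 - c ^ p) ^ (-r) := by
    have hy0 : 0 < (1 - c ^ p) ^ r := Real.rpow_pos_of_pos hbase r
    have key : (1 + r * c ^ p) * (1 - c ^ p) ^ r ≤ 1 := by
      calc (1 + r * c ^ p) * (1 - c ^ p) ^ r ≤ (1 + r * c ^ p) * (1 - r * c ^ p) := by
            apply mul_le_mul_of_nonneg_left h1 (by positivity)
        _ = 1 - (r * c ^ p)^2 := by ring
        _ ≤ 1 := by nlinarith
    rw [Real.rpow_neg hbase.le, inv_eq_one_div, le_div_iff₀ hy0]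
    exact key
  have h2 : (1 - c ^ p) ^ (-r) ≤ (1 - c ^ p) ^ (-q) :=
    Real.rpow_le_rpow_of_exponent_ge hbase (by linarith) (by linarith)
  have hφc : r * c ^ p ≤ φ c - φ 0 := by
    rw [hφ0, hφ]
    have : 1 + r * c ^ p ≤ (1 - c ^ p) ^ (-q) := le_trans h3 h2
    simpa using by linarith
  -- main estimate
  have hrbne : r * b ≠ 0 := by positivity
  have hMne : M ≠ 0 := by linarith
  have hcpow : 0 < c ^ (1-p) := Real.rpow_pos_of_pos hc0 _
  have hfin : M < r * b * c ^ (p-1) := by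
    have h5 : c ^ (p-1) = (c ^ (1-p))⁻¹ := by
      rw [show p - 1 = -(1-p) by ring, Real.rpow_neg hc0.le]
    have hinv : (A/2)⁻¹ ≤ (c ^ (1-p))⁻¹ := by
      apply inv_anti₀ hcpow hcp
    have hAval : (A/2)⁻¹ = 2 * M / (r * b) := by
      rw [hA]; field_simp
    rw [h5]
    calc M < 2 * M := by linarith
      _ = r * b * ((A/2)⁻¹) := by rw [hAval]; field_simp
      _ ≤ r * b * ((c ^ (1-p))⁻¹) := by
          apply mul_le_mul_of_nonneg_left hinv (by positivity)
  have heq : (b/c) * (r * c ^ p) = r * b * c ^ (p-1) := by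
    rw [Real.rpow_sub hc0, Real.rpow_one]
    field_simp
  refine ⟨b, c, hc0, hcb, hb1, hconc, ?_⟩
  have hmul : (b/c) * (r * c ^ p) ≤ (b/c) * (φ c - φ 0) :=
    mul_le_mul_of_nonneg_left hφc (by positivity)
  rw [heq] at hmul
  rw [hφ0] at hmul ⊢
  linarith [hM, hfin]
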